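/- Let X be a compact Hausdorff space, φ : X → X a continuous surjection, and L : C(X) → C(X) a transfer operator for α_φ(a) = a ∘ φ which is of finite type (admits a quasi-basis). Then φ is a local homeomorphism and there exists a continuous function ϱ : X → (0,1] with strictly positive values such that ∑_{x ∈ φ⁻¹(φ(x₀))} ϱ(x) = 1 for every x₀ ∈ X and L(a)(y) = ∑_{x ∈ φ⁻¹(y)} ϱ(x)·a(x) for all a ∈ C(X) and y ∈ X. Conversely, if φ : X → X is a surjective local homeomorphism and ϱ : X → (0,1] is a continuous cocycle for φ with strictly positive values, then the formula L(a)(y) = ∑_{x ∈ φ⁻¹(y)} ϱ(x)·a(x) defines a transfer operator for α_φ of finite type. -/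

import Mathlib

open scoped ComplexOrder

/-- `L` is a (unital, positive) transfer operator for the endomorphism
`a ↦ a ∘ φ` of `C(X, ℂ)`. -/
def IsTransferOpC {X : Type*} [TopologicalSpace X] (φ : C(X, X))
    (L : C(X, ℂ) →ₗ[ℂ] C(X, ℂ)) : Prop :=
  L 1 = 1 ∧ (∀ f : C(X, ℂ), (∀ x, 0 ≤ f x) → ∀ x, 0 ≤ (L f) x) ∧
    ∀ f g : C(X, ℂ), L (f.comp φ * g) = f * L g

namespace Stmt5Aux

open Set ContinuousMap

variable {X : Type*} [TopologicalSpace X]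

/-- complexification of a real continuous map -/
def creal (r : C(X, ℝ)) : C(X, ℂ) :=
  ⟨fun x => (r x : ℂ), Complex.continuous_ofReal.comp r.continuous⟩

@[simp] lemma creal_apply (r : C(X, ℝ)) (x : X) : creal r x = (r x : ℂ) := rfl

/-- real part -/
noncomputable def reCM (f : C(X, ℂ)) : C(X, ℝ) := ⟨fun x => (f x).re, Complex.continuous_re.comp f.continuous⟩

/-- imaginary part -/
noncomputable def imCM (f : C(X, ℂ)) : C(X, ℝ) := ⟨fun x => (f x).im, Complex.continuous_im.comp f.continuous⟩

/-- absolute value -/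
noncomputable def absCM (f : C(X, ℂ)) : C(X, ℝ) :=
  ⟨fun x => ‖f x‖, continuous_norm.comp f.continuous⟩

@[simp] lemma absCM_apply (f : C(X, ℂ)) (x : X) : absCM f x = ‖f x‖ := rfl

variable {φ : C(X, X)} {L : C(X, ℂ) →ₗ[ℂ] C(X, ℂ)}

section basic

variable (hL : IsTransferOpC φ L)
include hL

lemma lam_nonneg {r : C(X, ℝ)} (hr : ∀ x, 0 ≤ r x) (y : X) : 0 ≤ L (creal r) y :=
  hL.2.1 _ (fun x => Complex.zero_le_real.2 (hr x)) y

lemma lam_im (r : C(X, ℝ)) (y : X) : (L (creal r) y).im = 0 := by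
  have hdec : creal r = creal (r ⊔ 0) - creal ((-r) ⊔ 0) := by
    ext x
    simp only [creal_apply, ContinuousMap.sub_apply, ContinuousMap.sup_apply,
      ContinuousMap.neg_apply, ContinuousMap.zero_apply]
    rw [← Complex.ofReal_sub, max_zero_sub_max_neg_zero_eq_self]
  have h1 := lam_nonneg hL (r := r ⊔ 0) (fun x => by simp [le_max_iff]) y
  have h2 := lam_nonneg hL (r := (-r) ⊔ 0) (fun x => by simp [le_max_iff]) y
  rw [hdec, map_sub]
  simp only [ContinuousMap.sub_apply, Complex.sub_im]
  rw [← (Complex.nonneg_iff.mp h1).2, ← (Complex.nonneg_iff.mp h2).2]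
  ring

lemma lam_mono {r s : C(X, ℝ)} (h : ∀ x, r x ≤ s x) (y : X) :
    (L (creal r) y).re ≤ (L (creal s) y).re := by
  have hdec : creal s - creal r = creal (s - r) := by
    ext x; simp
  have h1 := lam_nonneg hL (r := s - r) (fun x => by simpa using h x) y
  rw [← hdec, map_sub] at h1
  have := (Complex.nonneg_iff.mp h1).1
  simp only [ContinuousMap.sub_apply, Complex.sub_re] at this
  linarith

omit hL in
lemma lam_decomp (f : C(X, ℂ)) (y : X) :
    L f y = L (creal (reCM f)) y + Complex.I * L (creal (imCM f)) y := by
  have hdec : f = creal (reCM f) + Complex.I • creal (imCM f) := by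
    ext x
    simp only [creal_apply, ContinuousMap.add_apply, ContinuousMap.smul_apply, smul_eq_mul,
      reCM, imCM, ContinuousMap.coe_mk]
    rw [mul_comm, Complex.re_add_im]
  conv_lhs => rw [hdec]
  rw [map_add, map_smul]
  simp

lemma lam_re_eq (f : C(X, ℂ)) (y : X) : (L f y).re = (L (creal (reCM f)) y).re := by
  rw [lam_decomp f y]
  simp [lam_im hL (imCM f) y]

lemma lam_abs (f : C(X, ℂ)) (y : X) :
    ‖L f y‖ ≤ (L (creal (absCM f)) y).re := by
  rcases eq_or_ne (L f y) 0 with h0 | h0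
  · rw [h0, norm_zero]
    exact (Complex.nonneg_iff.mp (lam_nonneg hL (fun x => norm_nonneg (f x)) y)).1
  · set z := L f y with hz
    set w : ℂ := (starRingEnd ℂ) z / (‖z‖ : ℂ) with hw
    have habsz : (‖z‖ : ℂ) ≠ 0 := by
      simpa using h0
    have hwz : w * z = (‖z‖ : ℂ) := by
      rw [hw, div_mul_eq_mul_div, ← Complex.normSq_eq_conj_mul_self, Complex.normSq_eq_norm_sq,
        div_eq_iff habsz]
      push_cast
      ring
    have habsw : ‖w‖ = 1 := by
      rw [hw, norm_div]
      simp only [Complex.norm_conj, Complex.norm_real, norm_norm]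
      field_simp [norm_ne_zero_iff.mpr h0]
    have hre : ‖z‖ = (L (w • f) y).re := by
      rw [map_smul]
      simp only [ContinuousMap.smul_apply, smul_eq_mul, ← hz]
      rw [hwz]
      simp
    rw [hre, lam_re_eq hL]
    apply lam_mono hL
    intro x
    simp only [reCM, ContinuousMap.coe_mk, ContinuousMap.smul_apply, smul_eq_mul, absCM_apply]
    calc (w * f x).re ≤ ‖w * f x‖ := Complex.re_le_norm _
      _ = ‖f x‖ := by rw [norm_mul, habsw, one_mul]

lemma lam_vanish [CompactSpace X] [T2Space X] (f : C(X, ℂ)) (y : X)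
    (h0 : ∀ x, φ x = y → f x = 0) : L f y = 0 := by
  have habs : (L (creal (absCM f)) y).re = 0 := by
    have hge : 0 ≤ (L (creal (absCM f)) y).re :=
      (Complex.nonneg_iff.mp (lam_nonneg hL (fun x => norm_nonneg (f x)) y)).1
    have hle : (L (creal (absCM f)) y).re ≤ 0 := by
      apply le_of_forall_pos_le_add
      intro ε hε
      rw [zero_add]
      set K : Set X := absCM f ⁻¹' Ici ε with hK
      have hKc : IsClosed K := isClosed_Ici.preimage (absCM f).continuous
      have hKcpt : IsCompact (⇑φ '' K) := (hKc.isCompact).image φ.continuous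
      have hyK : y ∉ ⇑φ '' K := by
        rintro ⟨x, hxK, rfl⟩
        have := h0 x rfl
        simp only [hK, mem_preimage, absCM_apply, mem_Ici, this, norm_zero] at hxK
        linarith
      obtain ⟨g, hg0, hg1, hg01⟩ := exists_continuous_zero_one_of_isClosed
        hKcpt.isClosed isClosed_singleton (disjoint_singleton_right.mpr hyK)
      have key := hL.2.2 (creal g) (creal (absCM f))
      have hcomp : (creal g).comp φ * creal (absCM f) = creal (g.comp φ * absCM f) := by
        ext x; simp
      rw [hcomp] at key
      have hval : L (creal (g.comp φ * absCM f)) y = L (creal (absCM f)) y := by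
        rw [key]
        simp only [ContinuousMap.mul_apply, creal_apply]
        rw [hg1 rfl]
        simp
      have hmono : (L (creal (g.comp φ * absCM f)) y).re ≤
          (L (creal (ContinuousMap.const X ε)) y).re := by
        apply lam_mono hL
        intro x
        simp only [ContinuousMap.mul_apply, ContinuousMap.comp_apply, ContinuousMap.const_apply]
        rcases le_or_gt ε (absCM f x) with hx | hx
        · have : g (φ x) = 0 := hg0 ⟨x, by simpa [hK] using hx, rfl⟩
          rw [this, zero_mul]; exact le_of_lt hε
        · calc g (φ x) * absCM f x ≤ 1 * absCM f x :=
              mul_le_mul_of_nonneg_right (hg01 (φ x)).2 (norm_nonneg (f x))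
            _ ≤ ε := by rw [one_mul]; exact le_of_lt hx
      have hconst : creal (ContinuousMap.const X ε) = (ε : ℂ) • (1 : C(X, ℂ)) := by
        ext x; simp
      rw [hconst, map_smul, hL.1] at hmono
      simp only [ContinuousMap.smul_apply, ContinuousMap.one_apply, smul_eq_mul, mul_one] at hmono
      calc (L (creal (absCM f)) y).re = (L (creal (g.comp φ * absCM f)) y).re := by rw [hval]
        _ ≤ ((ε : ℂ)).re := hmono
        _ = ε := Complex.ofReal_re ε
    linarith
  have := lam_abs hL f y
  rw [habs] at this
  exact norm_eq_zero.mp (le_antisymm this (norm_nonneg _))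

end basic

section qb

variable {N : ℕ} {u : Fin N → C(X, ℂ)}

/-- sum of `|u i|²` -/
noncomputable def Sfun (u : Fin N → C(X, ℂ)) : C(X, ℝ) :=
  ⟨fun x => ∑ i, Complex.normSq (u i x), by
    apply continuous_finset_sum
    exact fun i _ => Complex.continuous_normSq.comp (u i).continuous⟩

@[simp] lemma Sfun_apply (u : Fin N → C(X, ℂ)) (x : X) :
    Sfun u x = ∑ i, Complex.normSq (u i x) := rfl

/-- the kernel element implementing evaluation at `x` -/
noncomputable def gx (u : Fin N → C(X, ℂ)) (x : X) : C(X, ℂ) := ∑ i, (u i x) • star (u i)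

lemma gx_apply (u : Fin N → C(X, ℂ)) (x z : X) :
    gx u x z = ∑ i, u i x * (starRingEnd ℂ) (u i z) := by
  simp [gx]

lemma gx_diag (u : Fin N → C(X, ℂ)) (x : X) : gx u x x = ((Sfun u x : ℝ) : ℂ) := by
  rw [gx_apply, Sfun_apply]
  push_cast
  exact Finset.sum_congr rfl fun i _ => Complex.mul_conj _

variable (hL : IsTransferOpC φ L)
  (hu : ∀ a : C(X, ℂ), a = ∑ i, u i * ((L (star (u i) * a)).comp φ))
include hL hu

omit hL in
lemma evalid (a : C(X, ℂ)) (x : X) : a x = L (gx u x * a) (φ x) := by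
  conv_lhs => rw [hu a]
  have h1 : gx u x * a = ∑ i, (u i x) • (star (u i) * a) := by
    simp only [gx, Finset.sum_mul, smul_mul_assoc]
  rw [h1, map_sum]
  simp only [ContinuousMap.sum_apply, ContinuousMap.mul_apply, ContinuousMap.comp_apply,
    map_smul, ContinuousMap.smul_apply, smul_eq_mul]

omit hL in
lemma Sfun_pos (x : X) : 0 < Sfun u x := by
  have h0 : 0 ≤ Sfun u x := by
    rw [Sfun_apply]; exact Finset.sum_nonneg fun i _ => Complex.normSq_nonneg _
  rcases h0.lt_or_eq with h | h
  · exact h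
  · exfalso
    have hz : ∀ i, u i x = 0 := by
      intro i
      rw [Sfun_apply] at h
      have := (Finset.sum_eq_zero_iff_of_nonneg
        (fun i _ => Complex.normSq_nonneg (u i x))).mp h.symm i (Finset.mem_univ i)
      exact Complex.normSq_eq_zero.mp this
    have h1 := evalid hu 1 x
    rw [mul_one] at h1
    have hgx : gx u x = 0 := by
      rw [gx]
      refine Finset.sum_eq_zero fun i _ => ?_
      rw [hz i]
      exact zero_smul ℂ (star (u i))
    rw [hgx, map_zero] at h1
    simpa using h1

lemma gx_abs_le {M : ℝ} (hM : ∀ z, Sfun u z ≤ M) (x z : X) :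
    ‖gx u x z‖ ≤ M := by
  have hM0 : 0 ≤ M := le_trans (Sfun_pos hu x).le (hM x)
  have h1 : ‖gx u x z‖ ≤ ∑ i, ‖u i x‖ * ‖u i z‖ := by
    rw [gx_apply]
    refine le_trans (norm_sum_le _ _) (le_of_eq ?_)
    exact Finset.sum_congr rfl fun i _ => by rw [norm_mul, Complex.norm_conj]
  have h2 : (∑ i, ‖u i x‖ * ‖u i z‖) ^ 2 ≤
      Sfun u x * Sfun u z := by
    have := Finset.sum_mul_sq_le_sq_mul_sq Finset.univ
      (fun i => ‖u i x‖) (fun i => ‖u i z‖)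
    simpa [Complex.sq_norm] using this
  have h3 : Sfun u x * Sfun u z ≤ M ^ 2 := by
    have hz0 : (0:ℝ) ≤ Sfun u z := by
      rw [Sfun_apply]; exact Finset.sum_nonneg fun i _ => Complex.normSq_nonneg _
    have := mul_le_mul (hM x) (hM z) hz0 hM0
    simpa [sq] using this
  have h4 : (∑ i, ‖u i x‖ * ‖u i z‖) ^ 2 ≤ M ^ 2 := le_trans h2 h3
  have h5 : (0:ℝ) ≤ ∑ i, ‖u i x‖ * ‖u i z‖ :=
    Finset.sum_nonneg fun i _ => mul_nonneg (norm_nonneg _) (norm_nonneg _)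
  nlinarith

lemma bump_lb [CompactSpace X] [T2Space X] {M : ℝ} (hM : ∀ z, Sfun u z ≤ M) (x : X)
    (b : C(X, ℝ)) (hb01 : ∀ z, b z ∈ Icc (0:ℝ) 1) (hbx : b x = 1) :
    1 / M ≤ (L (creal b) (φ x)).re := by
  have hM0 : 0 < M := lt_of_lt_of_le (Sfun_pos hu x) (hM x)
  have h1 : (1 : ℂ) = L (gx u x * creal b) (φ x) := by
    have := evalid hu (creal b) x
    rw [creal_apply, hbx] at this
    simpa using this
  have h2 : (1:ℝ) ≤ (L (creal (absCM (gx u x * creal b))) (φ x)).re := by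
    have := lam_abs hL (gx u x * creal b) (φ x)
    rw [← h1] at this
    simpa using this
  have h3 : (L (creal (absCM (gx u x * creal b))) (φ x)).re ≤
      (L (creal (M • b)) (φ x)).re := by
    apply lam_mono hL
    intro z
    simp only [absCM_apply, ContinuousMap.mul_apply, creal_apply, ContinuousMap.smul_apply,
      smul_eq_mul]
    rw [norm_mul, Complex.norm_real, Real.norm_of_nonneg (hb01 z).1]
    exact mul_le_mul (gx_abs_le hL hu hM x z) le_rfl (hb01 z).1 hM0.le
  have h4 : creal (M • b) = (M : ℂ) • creal b := by ext z; simp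
  rw [h4, map_smul] at h3
  simp only [ContinuousMap.smul_apply, smul_eq_mul, Complex.mul_re, Complex.ofReal_re,
    Complex.ofReal_im, zero_mul, sub_zero] at h3
  rw [div_le_iff₀ hM0]
  nlinarith

variable [CompactSpace X] [T2Space X]

lemma card_le {M : ℝ} (hM0 : 0 < M) (hM : ∀ z, Sfun u z ≤ M) {y : X} (t : Finset X)
    (ht : ↑t ⊆ ⇑φ ⁻¹' {y}) : (t.card : ℝ) ≤ M := by
  obtain ⟨U, hU, hUdisj⟩ := t.finite_toSet.t2_separation
  have hbex : ∀ x : X, ∃ b : C(X, ℝ),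
      (∀ z, b z ∈ Icc (0:ℝ) 1) ∧ b x = 1 ∧ ∀ z, z ∉ U x → b z = 0 := by
    intro x
    obtain ⟨g, hg0, hg1, hg01⟩ := exists_continuous_zero_one_of_isClosed
      (hU x).2.isClosed_compl isClosed_singleton
      (disjoint_singleton_right.mpr (fun hc => hc (hU x).1))
    exact ⟨g, hg01, hg1 rfl, fun z hz => hg0 hz⟩
  choose b hb01 hbx hb0 using hbex
  have hsum : ∀ z, ∑ x ∈ t, b x z ≤ 1 := by
    intro z
    by_cases hz : ∃ x₀ ∈ t, z ∈ U x₀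
    · obtain ⟨x₀, hx₀t, hzU⟩ := hz
      rw [Finset.sum_eq_single x₀]
      · exact (hb01 x₀ z).2
      · intro x hxt hne
        refine hb0 x z fun hzx => ?_
        exact ((hUdisj hxt hx₀t hne).le_bot ⟨hzx, hzU⟩)
      · intro h; exact absurd hx₀t h
    · push_neg at hz
      rw [Finset.sum_eq_zero fun x hx => hb0 x z (hz x hx)]
      exact zero_le_one
  have hterm : ∀ x ∈ t, 1 / M ≤ (L (creal (b x)) y).re := by
    intro x hxt
    have hφx : φ x = y := ht hxt
    have := bump_lb hL hu hM x (b x) (hb01 x) (hbx x)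
    rwa [hφx] at this
  have hsum2 : ∑ x ∈ t, (L (creal (b x)) y).re ≤ 1 := by
    have hcast : ∑ x ∈ t, (L (creal (b x)) y).re = (L (creal (∑ x ∈ t, b x)) y).re := by
      have h1 : creal (∑ x ∈ t, b x) = ∑ x ∈ t, creal (b x) := by
        ext z
        simp [ContinuousMap.sum_apply]
      rw [h1, map_sum]
      rw [ContinuousMap.sum_apply, Complex.re_sum]
    rw [hcast]
    have h2 := lam_mono hL (r := ∑ x ∈ t, b x) (s := 1)
      (fun z => by simpa [ContinuousMap.sum_apply] using hsum z) y
    have h3 : creal (1 : C(X, ℝ)) = (1 : C(X, ℂ)) := by ext z; simp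
    rwa [h3, hL.1] at h2
  have h4 : (t.card : ℝ) * (1 / M) ≤ 1 := by
    calc (t.card : ℝ) * (1 / M) = ∑ _x ∈ t, 1 / M := by
          rw [Finset.sum_const, nsmul_eq_mul]
      _ ≤ ∑ x ∈ t, (L (creal (b x)) y).re := Finset.sum_le_sum hterm
      _ ≤ 1 := hsum2
  rw [mul_one_div, div_le_one hM0] at h4
  exact h4

lemma fiber_finite {M : ℝ} (hM0 : 0 < M) (hM : ∀ z, Sfun u z ≤ M) (y : X) :
    (⇑φ ⁻¹' {y}).Finite := by
  by_contra h
  have hinf : (⇑φ ⁻¹' {y}).Infinite := h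
  obtain ⟨t, hts, hcard⟩ := hinf.exists_subset_card_eq (⌈M⌉₊ + 1)
  have h1 := card_le hL hu hM0 hM t hts
  rw [hcard] at h1
  push_cast at h1
  have h2 := Nat.le_ceil M
  linarith

lemma lam_repr {M : ℝ} (hM0 : 0 < M) (hM : ∀ z, Sfun u z ≤ M) (y : X)
    (hfin : (⇑φ ⁻¹' {y}).Finite) (a : C(X, ℂ)) :
    L a y = ∑ x ∈ hfin.toFinset, (((Sfun u x)⁻¹ : ℝ) : ℂ) * a x := by
  classical
  set F := hfin.toFinset with hF
  have hbex : ∀ x : X, ∃ b : C(X, ℝ),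
      (∀ z, b z ∈ Icc (0:ℝ) 1) ∧ b x = 1 ∧ ∀ z ∈ F.erase x, b z = 0 := by
    intro x
    have hclosed : IsClosed (↑(F.erase x) : Set X) := (F.erase x).finite_toSet.isClosed
    obtain ⟨g, hg0, hg1, hg01⟩ := exists_continuous_zero_one_of_isClosed
      hclosed isClosed_singleton
      (disjoint_singleton_right.mpr
        (fun hc => (Finset.mem_erase.mp (Finset.mem_coe.mp hc)).1 rfl))
    exact ⟨g, hg01, hg1 rfl, fun z hz => hg0 (Finset.mem_coe.mpr hz)⟩
  choose b hb01 hbx hb0 using hbex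
  have key2 : ∀ c : C(X, ℂ), L c y = ∑ x ∈ F, c x * L (creal (b x)) y := by
    intro c
    have hvan : L (c - ∑ x ∈ F, c x • creal (b x)) y = 0 := by
      apply lam_vanish hL
      intro z hz
      have hzF : z ∈ F := by rw [hF, Set.Finite.mem_toFinset]; exact hz
      simp only [ContinuousMap.sub_apply, ContinuousMap.sum_apply, ContinuousMap.smul_apply,
        smul_eq_mul, creal_apply]
      rw [Finset.sum_eq_single z]
      · rw [hbx z]
        simp
      · intro x hxF hne
        rw [hb0 x z (Finset.mem_erase.mpr ⟨hne.symm, hzF⟩)]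
        simp
      · intro h; exact absurd hzF h
    rw [map_sub, map_sum] at hvan
    simp only [map_smul, ContinuousMap.sub_apply, ContinuousMap.sum_apply,
      ContinuousMap.smul_apply, smul_eq_mul] at hvan
    exact sub_eq_zero.mp hvan
  have key3 : ∀ x ∈ F, L (creal (b x)) y = (((Sfun u x)⁻¹ : ℝ) : ℂ) := by
    intro x hxF
    have hφx : φ x = y := by
      have := (Set.Finite.mem_toFinset hfin).mp (hF ▸ hxF)
      simpa using this
    have h1 : (1 : ℂ) = L (gx u x * creal (b x)) y := by
      have := evalid hu (creal (b x)) x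
      rw [hφx] at this
      rw [creal_apply, hbx x] at this
      simpa using this
    rw [key2 (gx u x * creal (b x))] at h1
    rw [Finset.sum_eq_single x] at h1
    · simp only [ContinuousMap.mul_apply, creal_apply, hbx x, Complex.ofReal_one, mul_one] at h1
      rw [gx_diag] at h1
      rw [Complex.ofReal_inv]
      exact eq_inv_of_mul_eq_one_right h1.symm
    · intro x' hx'F hne
      simp only [ContinuousMap.mul_apply, creal_apply]
      rw [hb0 x x' (Finset.mem_erase.mpr ⟨hne, hx'F⟩)]
      simp
    · intro h; exact absurd hxF h
  rw [key2 a]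
  refine Finset.sum_congr rfl fun x hx => ?_
  rw [key3 x hx, mul_comm]

end qb

section geom

variable [CompactSpace X] [T2Space X] {ϱ : C(X, ℝ)}
  (hϱpos : ∀ x, 0 < ϱ x) (hfin : ∀ y : X, (⇑φ ⁻¹' {y}).Finite)
  (hrepr : ∀ (r : C(X, ℝ)) (y : X), (L (creal r) y).re = ∑ x ∈ (hfin y).toFinset, ϱ x * r x)
include hϱpos hrepr

omit [CompactSpace X] [T2Space X] hϱpos hrepr in
lemma mem_fiber_finset {y x : X} : x ∈ (hfin y).toFinset ↔ φ x = y := by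
  rw [Set.Finite.mem_toFinset]
  simp

lemma open_image (W : Set X) (hW : IsOpen W) : IsOpen (⇑φ '' W) := by
  rw [isOpen_iff_mem_nhds]
  rintro y ⟨x, hxW, rfl⟩
  obtain ⟨c, hc0, hc1, hc01⟩ := exists_continuous_zero_one_of_isClosed
    hW.isClosed_compl isClosed_singleton
    (disjoint_singleton_right.mpr (fun hc => hc hxW))
  set V : Set X := {y' | 0 < (L (creal c) y').re} with hV
  have hVopen : IsOpen V :=
    isOpen_lt continuous_const (Complex.continuous_re.comp (L (creal c)).continuous)
  have hφxV : φ x ∈ V := by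
    rw [hV, Set.mem_setOf_eq, hrepr]
    have hx : x ∈ (hfin (φ x)).toFinset := mem_fiber_finset hfin |>.mpr rfl
    have h1 : ϱ x * c x ≤ ∑ x' ∈ (hfin (φ x)).toFinset, ϱ x' * c x' :=
      Finset.single_le_sum
        (fun x' _ => mul_nonneg (hϱpos x').le (hc01 x').1) hx
    have h2 : 0 < ϱ x * c x := by
      have hcx : c x = 1 := by simpa using hc1 rfl
      rw [hcx, mul_one]
      exact hϱpos x
    linarith
  have hVsub : V ⊆ ⇑φ '' W := by
    intro y' hy'
    rw [hV, Set.mem_setOf_eq, hrepr] at hy'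
    obtain ⟨x', hx'F, hx'ne⟩ := Finset.exists_ne_zero_of_sum_ne_zero (ne_of_gt hy')
    refine ⟨x', ?_, mem_fiber_finset hfin |>.mp hx'F⟩
    by_contra hx'W
    exact hx'ne (by simp [hc0 hx'W])
  exact Filter.mem_of_superset (hVopen.mem_nhds hφxV) hVsub

lemma loc_homeo : IsLocalHomeomorph ⇑φ := by
  rw [isLocalHomeomorph_iff_isOpenEmbedding_restrict]
  intro x₀
  classical
  obtain ⟨a, ha0, ha1, ha01⟩ := exists_continuous_zero_one_of_isClosed
    (((hfin (φ x₀)).toFinset.erase x₀).finite_toSet.isClosed) isClosed_singleton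
    (disjoint_singleton_right.mpr
      (fun hc => (Finset.mem_erase.mp (Finset.mem_coe.mp hc)).1 rfl))
  set hfn : X → ℝ := fun x => (L (creal a) (φ x)).re - ϱ x * a x with hhfn
  have hhcont : Continuous hfn := by
    apply Continuous.sub
    · exact Complex.continuous_re.comp ((L (creal a)).continuous.comp φ.continuous)
    · exact ϱ.continuous.mul a.continuous
  have hfn_eq : ∀ x, hfn x = (∑ x' ∈ (hfin (φ x)).toFinset, ϱ x' * a x') - ϱ x * a x := by
    intro x
    rw [hhfn]
    simp only [hrepr]
  have hfn_nonneg : ∀ x, 0 ≤ hfn x := by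
    intro x
    rw [hfn_eq]
    have hx : x ∈ (hfin (φ x)).toFinset := mem_fiber_finset hfin |>.mpr rfl
    have := Finset.single_le_sum
      (fun x' _ => mul_nonneg (hϱpos x').le (ha01 x').1) hx
    linarith
  have hfn_pair : ∀ x x', φ x' = φ x → x' ≠ x → ϱ x' * a x' ≤ hfn x := by
    intro x x' hφ hne
    rw [hfn_eq]
    have hxF : x ∈ (hfin (φ x)).toFinset := mem_fiber_finset hfin |>.mpr rfl
    have hx'F : x' ∈ (hfin (φ x)).toFinset := mem_fiber_finset hfin |>.mpr hφ
    have hsub : {x, x'} ⊆ (hfin (φ x)).toFinset := by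
      intro z hz
      rcases Finset.mem_insert.mp hz with rfl | hz
      · exact hxF
      · rw [Finset.mem_singleton.mp hz]; exact hx'F
    have hpair : ∑ z ∈ ({x, x'} : Finset X), ϱ z * a z ≤
        ∑ z ∈ (hfin (φ x)).toFinset, ϱ z * a z :=
      Finset.sum_le_sum_of_subset_of_nonneg hsub
        (fun z _ _ => mul_nonneg (hϱpos z).le (ha01 z).1)
    rw [Finset.sum_pair (Ne.symm hne)] at hpair
    linarith
  set U : Set X := {x | hfn x < ϱ x * a x} with hU
  have hUopen : IsOpen U := isOpen_lt hhcont (ϱ.continuous.mul a.continuous)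
  have hx₀U : x₀ ∈ U := by
    rw [hU, Set.mem_setOf_eq, hfn_eq]
    have hsum : ∑ x' ∈ (hfin (φ x₀)).toFinset, ϱ x' * a x' = ϱ x₀ * a x₀ := by
      rw [Finset.sum_eq_single x₀]
      · intro x' hx'F hne
        simp [ha0 (Finset.mem_coe.mpr (Finset.mem_erase.mpr ⟨hne, hx'F⟩))]
      · intro h
        exact absurd (mem_fiber_finset hfin |>.mpr rfl) h
    have hax₀ : a x₀ = 1 := by simpa using ha1 rfl
    rw [hsum, hax₀, mul_one]
    simpa using hϱpos x₀
  have hinj : Set.InjOn ⇑φ U := by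
    intro x hx x' hx' heq
    by_contra hne
    rw [hU, Set.mem_setOf_eq] at hx hx'
    have h1 : ϱ x' * a x' ≤ hfn x := hfn_pair x x' heq.symm (Ne.symm hne)
    have h2 : ϱ x * a x ≤ hfn x' := hfn_pair x' x heq hne
    linarith
  refine ⟨U, hUopen.mem_nhds hx₀U, ?_⟩
  apply Topology.IsOpenEmbedding.of_continuous_injective_isOpenMap
  · exact φ.continuous.comp continuous_subtype_val
  · exact (Set.injOn_iff_injective.mp hinj)
  · intro s hs
    obtain ⟨W, hWopen, hWs⟩ := isOpen_induced_iff.mp hs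
    have himg : U.restrict ⇑φ '' s = ⇑φ '' (Subtype.val '' s) := by
      rw [Set.image_image]; rfl
    rw [show U.domRestrict ⇑φ '' s = _ from himg, ← hWs]
    have : (Subtype.val '' (Subtype.val ⁻¹' W : Set U) : Set X) = U ∩ W := by
      rw [Subtype.image_preimage_coe]
    rw [this]
    exact open_image hϱpos hfin hrepr _ (hUopen.inter hWopen)

end geom

section conv

variable [CompactSpace X] [T2Space X]

lemma loc_fiber_finite (hloc : IsLocalHomeomorph ⇑φ) (y : X) : (⇑φ ⁻¹' {y}).Finite := by
  choose e hmem hφe using hloc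
  have hinj : ∀ z, Set.InjOn ⇑φ (e z).source := fun z => by
    rw [hφe z]; exact (e z).injOn
  have hcpt : IsCompact (⇑φ ⁻¹' {y}) :=
    (isClosed_singleton.preimage φ.continuous).isCompact
  obtain ⟨t, ht⟩ := hcpt.elim_finite_subcover (fun z => (e z).source)
    (fun z => (e z).open_source)
    (fun z hz => Set.mem_iUnion.mpr ⟨z, hmem z⟩)
  have hfin : ∀ z : X, (⇑φ ⁻¹' {y} ∩ (e z).source).Finite := by
    intro z
    apply Set.Subsingleton.finite
    intro w1 hw1 w2 hw2
    exact hinj z hw1.2 hw2.2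
      ((Set.mem_singleton_iff.mp hw1.1).trans (Set.mem_singleton_iff.mp hw2.1).symm)
  refine Set.Finite.subset (Set.Finite.biUnion t.finite_toSet (fun z _ => hfin z)) ?_
  intro w hw
  obtain ⟨z, hzt, hzs⟩ := Set.mem_iUnion₂.mp (ht hw)
  exact Set.mem_iUnion₂.mpr ⟨z, hzt, hw, hzs⟩

lemma mem_fiber_finset' (hloc : IsLocalHomeomorph ⇑φ) {y x : X} :
    x ∈ (loc_fiber_finite hloc y).toFinset ↔ φ x = y := by
  rw [Set.Finite.mem_toFinset]
  simp

lemma fibersum_continuous (hloc : IsLocalHomeomorph ⇑φ) (g : X → ℂ) (hg : Continuous g) :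
    Continuous fun y => ∑ x ∈ (loc_fiber_finite hloc y).toFinset, g x := by
  classical
  obtain ⟨e, hmem, hφe⟩ : ∃ e : X → OpenPartialHomeomorph X X,
      (∀ x, x ∈ (e x).source) ∧ ∀ x, ⇑φ = ⇑(e x) := by
    choose e hmem hφe using hloc
    exact ⟨e, hmem, hφe⟩
  rw [continuous_iff_continuousAt]
  intro y₀
  set F := (loc_fiber_finite hloc y₀).toFinset with hF
  obtain ⟨U, hU, hUdisj⟩ := F.finite_toSet.t2_separation
  set V : X → Set X := fun x => (e x).source ∩ U x with hV
  have hVopen : ∀ x, IsOpen (V x) := fun x => (e x).open_source.inter (hU x).2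
  have hxV : ∀ x, x ∈ V x := fun x => ⟨hmem x, (hU x).1⟩
  have hVsub : ∀ x, V x ⊆ (e x).source := fun x => Set.inter_subset_left
  have hVU : ∀ x, V x ⊆ U x := fun x => Set.inter_subset_right
  have hφV : ∀ x, ⇑φ '' V x = ⇑(e x) '' V x := fun x => by rw [hφe x]
  have hφVopen : ∀ x, IsOpen (⇑φ '' V x) := fun x => by
    rw [hφV x]
    exact (e x).isOpen_image_of_subset_source (hVopen x) (hVsub x)
  have hinjV : ∀ x, Set.InjOn ⇑φ (V x) := fun x => by
    rw [hφe x]; exact (e x).injOn.mono (hVsub x)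
  set C : Set X := ⇑φ '' (Set.univ \ ⋃ x ∈ F, V x) with hC
  have hCclosed : IsClosed C := φ.continuous.isClosedMap _
    (isClosed_univ.sdiff (isOpen_biUnion fun x _ => hVopen x))
  have hy₀C : y₀ ∉ C := by
    rintro ⟨z, ⟨-, hz⟩, hφz⟩
    exact hz (Set.mem_biUnion ((mem_fiber_finset' hloc).mpr hφz) (hxV z))
  set W : Set X := (⋂ x ∈ F, ⇑φ '' V x) ∩ Cᶜ with hW
  have hWopen : IsOpen W :=
    (isOpen_biInter_finset fun x _ => hφVopen x).inter hCclosed.isOpen_compl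
  have hy₀W : y₀ ∈ W := by
    refine ⟨Set.mem_biInter fun x hxF => ?_, hy₀C⟩
    exact ⟨x, hxV x, (mem_fiber_finset' hloc).mp hxF⟩
  set σ : X → X → X := fun x y => (e x).symm y with hσ
  have hσV : ∀ x, ∀ y ∈ ⇑φ '' V x, σ x y ∈ V x ∧ φ (σ x y) = y := by
    intro x y hy
    obtain ⟨v, hvV, rfl⟩ := hy
    have hvs : v ∈ (e x).source := hVsub x hvV
    have hvfix : σ x (φ v) = v := by
      have : φ v = e x v := by rw [hφe x]
      rw [hσ, this]
      exact (e x).left_inv hvs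
    rw [hvfix]
    exact ⟨hvV, rfl⟩
  have hyV : ∀ y ∈ W, ∀ x ∈ F, y ∈ ⇑φ '' V x := by
    intro y hyW x hxF
    exact Set.mem_iInter₂.mp hyW.1 x hxF
  have hfib : ∀ y ∈ W, (loc_fiber_finite hloc y).toFinset = F.image (fun x => σ x y) := by
    intro y hyW
    apply Finset.ext
    intro z
    rw [mem_fiber_finset' hloc, Finset.mem_image]
    constructor
    · intro hφz
      have hzU : z ∈ ⋃ x ∈ F, V x := by
        by_contra hzU
        exact hyW.2 ⟨z, ⟨trivial, hzU⟩, hφz⟩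
      obtain ⟨x, hxF, hzV⟩ := Set.mem_iUnion₂.mp hzU
      refine ⟨x, hxF, ?_⟩
      obtain ⟨hσV1, hσV2⟩ := hσV x y (hyV y hyW x hxF)
      exact hinjV x hσV1 hzV (by rw [hσV2, hφz])
    · rintro ⟨x, hxF, rfl⟩
      exact (hσV x y (hyV y hyW x hxF)).2
  have hσinj : ∀ y ∈ W, ∀ x1 ∈ F, ∀ x2 ∈ F, σ x1 y = σ x2 y → x1 = x2 := by
    intro y hyW x1 h1 x2 h2 heq
    by_contra hne
    have hv1 := (hσV x1 y (hyV y hyW x1 h1)).1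
    have hv2 := (hσV x2 y (hyV y hyW x2 h2)).1
    rw [heq] at hv1
    exact (hUdisj h1 h2 hne).le_bot ⟨hVU x1 hv1, hVU x2 hv2⟩
  have heqW : ∀ y ∈ W, (∑ x ∈ (loc_fiber_finite hloc y).toFinset, g x)
      = ∑ x ∈ F, g (σ x y) := by
    intro y hyW
    rw [hfib y hyW, Finset.sum_image (hσinj y hyW)]
  have hcontW : ContinuousOn (fun y => ∑ x ∈ F, g (σ x y)) W := by
    apply continuousOn_finset_sum
    intro x hxF
    have hWsub : W ⊆ (e x).target := by
      intro y hyW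
      have hy' := hyV y hyW x hxF
      rw [hφV x] at hy'
      obtain ⟨v, hvV, rfl⟩ := hy'
      exact (e x).map_source (hVsub x hvV)
    exact hg.comp_continuousOn ((e x).continuousOn_symm.mono hWsub)
  have hca : ContinuousAt (fun y => ∑ x ∈ F, g (σ x y)) y₀ :=
    hcontW.continuousAt (hWopen.mem_nhds hy₀W)
  apply hca.congr
  filter_upwards [hWopen.mem_nhds hy₀W] with y hy
  exact (heqW y hy).symm

/-- the transfer operator associated to a cocycle -/
noncomputable def Lop (hloc : IsLocalHomeomorph ⇑φ) (ϱ : C(X, ℝ)) :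
    C(X, ℂ) →ₗ[ℂ] C(X, ℂ) where
  toFun a := ⟨fun y => ∑ x ∈ (loc_fiber_finite hloc y).toFinset, ((ϱ x : ℝ) : ℂ) * a x,
    fibersum_continuous hloc _
      ((Complex.continuous_ofReal.comp ϱ.continuous).mul a.continuous)⟩
  map_add' a b := by
    ext y
    simp only [ContinuousMap.coe_mk, ContinuousMap.add_apply, mul_add]
    rw [Finset.sum_add_distrib]
  map_smul' c a := by
    ext y
    simp only [ContinuousMap.coe_mk, ContinuousMap.smul_apply, smul_eq_mul,
      RingHom.id_apply, Finset.mul_sum]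
    exact Finset.sum_congr rfl fun x _ => by ring

lemma Lop_apply (hloc : IsLocalHomeomorph ⇑φ) (ϱ : C(X, ℝ)) (a : C(X, ℂ)) (y : X) :
    Lop hloc ϱ a y = ∑ x ∈ (loc_fiber_finite hloc y).toFinset, ((ϱ x : ℝ) : ℂ) * a x := rfl

end conv

end Stmt5Aux

theorem stmt5 {X : Type*} [TopologicalSpace X] [CompactSpace X] [T2Space X]
    (φ : C(X, X)) (hsurj : Function.Surjective φ) :
    (∀ L : C(X, ℂ) →ₗ[ℂ] C(X, ℂ), IsTransferOpC φ L →
      (∃ (N : ℕ) (u : Fin N → C(X, ℂ)),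
          ∀ a : C(X, ℂ), a = ∑ i, u i * ((L (star (u i) * a)).comp φ)) →
      (IsLocalHomeomorph (⇑φ) ∧
        ∃ ϱ : C(X, ℝ), (∀ x, 0 < ϱ x ∧ ϱ x ≤ 1) ∧
          (∀ x₀ : X, ∑ᶠ x ∈ ⇑φ ⁻¹' {φ x₀}, ϱ x = 1) ∧
          ∀ (a : C(X, ℂ)) (y : X), (L a) y = ∑ᶠ x ∈ ⇑φ ⁻¹' {y}, (ϱ x : ℂ) * a x)) ∧
    (IsLocalHomeomorph (⇑φ) →
      ∀ ϱ : C(X, ℝ), (∀ x, 0 < ϱ x ∧ ϱ x ≤ 1) →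
        (∀ x₀ : X, ∑ᶠ x ∈ ⇑φ ⁻¹' {φ x₀}, ϱ x = 1) →
        ∃ L : C(X, ℂ) →ₗ[ℂ] C(X, ℂ),
          (∀ (a : C(X, ℂ)) (y : X), (L a) y = ∑ᶠ x ∈ ⇑φ ⁻¹' {y}, (ϱ x : ℂ) * a x) ∧
          IsTransferOpC φ L ∧
          ∃ (N : ℕ) (u : Fin N → C(X, ℂ)),
            ∀ a : C(X, ℂ), a = ∑ i, u i * ((L (star (u i) * a)).comp φ)) := by
  open Stmt5Aux in
  constructor
  · rintro L hL ⟨N, u, hu⟩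
    obtain ⟨M, hM0, hM⟩ : ∃ M : ℝ, 0 < M ∧ ∀ z, Sfun u z ≤ M := by
      rcases isEmpty_or_nonempty X with hX | hX
      · exact ⟨1, one_pos, fun z => (IsEmpty.false z).elim⟩
      · obtain ⟨z₀, -, hz₀⟩ := isCompact_univ.exists_isMaxOn Set.univ_nonempty
          (Sfun u).continuous.continuousOn
        exact ⟨max (Sfun u z₀) 1, lt_of_lt_of_le one_pos (le_max_right _ _),
          fun z => le_trans (hz₀ (Set.mem_univ z)) (le_max_left _ _)⟩
    have hfin : ∀ y : X, (⇑φ ⁻¹' {y}).Finite := fiber_finite hL hu hM0 hM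
    have hScont : Continuous fun x => (Sfun u x)⁻¹ :=
      (Sfun u).continuous.inv₀ fun x => (Sfun_pos hu x).ne'
    set ϱ : C(X, ℝ) := ⟨fun x => (Sfun u x)⁻¹, hScont⟩ with hϱ
    have hϱpos : ∀ x, 0 < ϱ x := fun x => inv_pos.mpr (Sfun_pos hu x)
    have hreprC : ∀ (a : C(X, ℂ)) (y : X),
        L a y = ∑ x ∈ (hfin y).toFinset, ((ϱ x : ℝ) : ℂ) * a x := fun a y =>
      lam_repr hL hu hM0 hM y (hfin y) a
    have hreprR : ∀ (r : C(X, ℝ)) (y : X),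
        (L (creal r) y).re = ∑ x ∈ (hfin y).toFinset, ϱ x * r x := by
      intro r y
      have h1 : L (creal r) y = ((∑ x ∈ (hfin y).toFinset, ϱ x * r x : ℝ) : ℂ) := by
        rw [hreprC]
        push_cast
        rfl
      rw [h1, Complex.ofReal_re]
    have hcoc : ∀ y : X, ∑ x ∈ (hfin y).toFinset, ϱ x = 1 := by
      intro y
      have h1 : (1 : ℂ) = ∑ x ∈ (hfin y).toFinset, ((ϱ x : ℝ) : ℂ) * 1 := by
        have := hreprC 1 y
        rw [hL.1] at this
        simpa using this
      have h2 : (1 : ℂ) = ((∑ x ∈ (hfin y).toFinset, ϱ x : ℝ) : ℂ) := by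
        rw [h1]; push_cast; ring_nf
      exact_mod_cast h2.symm
    refine ⟨loc_homeo hϱpos hfin hreprR, ϱ, ?_, ?_, ?_⟩
    · intro x
      refine ⟨hϱpos x, ?_⟩
      have hx : x ∈ (hfin (φ x)).toFinset := mem_fiber_finset hfin |>.mpr rfl
      have := Finset.single_le_sum (f := fun z => ϱ z)
        (fun z _ => (hϱpos z).le) hx
      rw [hcoc (φ x)] at this
      exact this
    · intro x₀
      rw [← Set.Finite.coe_toFinset (hfin (φ x₀)), finsum_mem_coe_finset]
      exact hcoc (φ x₀)
    · intro a y
      rw [← Set.Finite.coe_toFinset (hfin y), finsum_mem_coe_finset]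
      exact hreprC a y
  · intro hloc ϱ hϱ hcoc
    classical
    set L := Lop hloc ϱ with hLdef
    have hLapp : ∀ (a : C(X, ℂ)) (y : X),
        L a y = ∑ x ∈ (loc_fiber_finite hloc y).toFinset, ((ϱ x : ℝ) : ℂ) * a x :=
      fun a y => rfl
    have hform : ∀ (a : C(X, ℂ)) (y : X), L a y = ∑ᶠ x ∈ ⇑φ ⁻¹' {y}, (ϱ x : ℂ) * a x := by
      intro a y
      rw [← Set.Finite.coe_toFinset (loc_fiber_finite hloc y), finsum_mem_coe_finset]
      rfl
    have hL1 : L (1 : C(X, ℂ)) = 1 := by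
      ext y
      obtain ⟨x₀, rfl⟩ := hsurj y
      have hc := hcoc x₀
      rw [← Set.Finite.coe_toFinset (loc_fiber_finite hloc (φ x₀)),
        finsum_mem_coe_finset] at hc
      rw [hLapp]
      simp only [ContinuousMap.one_apply, mul_one]
      calc ∑ x ∈ (loc_fiber_finite hloc (φ x₀)).toFinset, ((ϱ x : ℝ) : ℂ)
          = ((∑ x ∈ (loc_fiber_finite hloc (φ x₀)).toFinset, ϱ x : ℝ) : ℂ) := by
            push_cast; rfl
        _ = 1 := by rw [hc]; norm_num
    have hpos : ∀ f : C(X, ℂ), (∀ x, 0 ≤ f x) → ∀ y, 0 ≤ L f y := by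
      intro f hf y
      rw [hLapp]
      apply Finset.sum_nonneg
      intro x _
      obtain ⟨h1, h2⟩ := Complex.nonneg_iff.mp (hf x)
      have hz : f x = ((f x).re : ℂ) := Complex.ext (by simp) (by simp [h2.symm])
      rw [hz, ← Complex.ofReal_mul]
      exact Complex.zero_le_real.2 (mul_nonneg (hϱ x).1.le h1)
    have htr : ∀ f g : C(X, ℂ), L (f.comp φ * g) = f * L g := by
      intro f g
      ext y
      rw [ContinuousMap.mul_apply, hLapp, hLapp, Finset.mul_sum]
      apply Finset.sum_congr rfl
      intro x hx
      have hφx : φ x = y := (mem_fiber_finset' hloc).mp hx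
      simp only [ContinuousMap.mul_apply, ContinuousMap.comp_apply, hφx]
      ring
    refine ⟨L, hform, ⟨hL1, hpos, htr⟩, ?_⟩
    obtain ⟨e, hmem, hφe⟩ : ∃ e : X → OpenPartialHomeomorph X X,
        (∀ x, x ∈ (e x).source) ∧ ∀ x, ⇑φ = ⇑(e x) := by
      choose e hmem hφe using fun x => hloc x
      exact ⟨e, hmem, hφe⟩
    obtain ⟨t, ht⟩ := isCompact_univ.elim_finite_subcover (fun z => (e z).source)
      (fun z => (e z).open_source) (fun z _ => Set.mem_iUnion.mpr ⟨z, hmem z⟩)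
    set N := t.card with hN
    set κ := t.equivFin with hκ
    set U : Fin N → Set X := fun i => (e ((κ.symm i : t) : X)).source with hUdef
    have hUopen : ∀ i, IsOpen (U i) := fun i => OpenPartialHomeomorph.open_source _
    have hUinj : ∀ i, Set.InjOn ⇑φ (U i) := fun i => by
      rw [hφe]; exact OpenPartialHomeomorph.injOn _
    have hUcov : (Set.univ : Set X) ⊆ ⋃ i, U i := by
      intro z _
      obtain ⟨x, hxt, hzs⟩ := Set.mem_iUnion₂.mp (ht (Set.mem_univ z))
      refine Set.mem_iUnion.mpr ⟨κ ⟨x, hxt⟩, ?_⟩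
      rw [hUdef]
      simp only [Equiv.symm_apply_apply]
      exact hzs
    obtain ⟨p, hp⟩ := PartitionOfUnity.exists_isSubordinate isClosed_univ U hUopen hUcov
    have hpsum : ∀ x, ∑ i, p i x = 1 := by
      intro x
      have := p.sum_eq_one (Set.mem_univ x)
      rwa [finsum_eq_sum_of_fintype] at this
    have hpnonneg : ∀ i (x : X), 0 ≤ p i x := fun i x => p.nonneg i x
    set u : Fin N → C(X, ℂ) := fun i =>
      ⟨fun x => ((Real.sqrt (p i x / ϱ x) : ℝ) : ℂ),
        Complex.continuous_ofReal.comp (Real.continuous_sqrt.comp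
          ((p i).continuous.div ϱ.continuous fun x => (hϱ x).1.ne'))⟩ with hu
    have hustar : ∀ i, star (u i) = u i := by
      intro i
      ext z
      simp [hu, Complex.conj_ofReal]
    have huzero : ∀ i (x : X), p i x = 0 → u i x = 0 := by
      intro i x h0
      simp [hu, h0]
    have husupp : ∀ i (x : X), p i x ≠ 0 → x ∈ U i := by
      intro i x h0
      exact hp i (subset_tsupport _ (Function.mem_support.mpr h0))
    refine ⟨N, u, ?_⟩
    intro a
    ext x
    rw [ContinuousMap.sum_apply]
    have hterm : ∀ i, (u i * ((L (star (u i) * a)).comp φ)) x = ((p i x : ℝ) : ℂ) * a x := by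
      intro i
      rw [ContinuousMap.mul_apply, ContinuousMap.comp_apply, hustar i, hLapp]
      rcases eq_or_ne (p i x) 0 with hp0 | hp0
      · rw [huzero i x hp0, hp0]
        simp
      · have hxU : x ∈ U i := husupp i x hp0
        rw [Finset.sum_eq_single x]
        · rw [ContinuousMap.mul_apply]
          have hsqrt : Real.sqrt (p i x / ϱ x) * (ϱ x * Real.sqrt (p i x / ϱ x)) = p i x := by
            rw [show Real.sqrt (p i x / ϱ x) * (ϱ x * Real.sqrt (p i x / ϱ x))
                = Real.sqrt (p i x / ϱ x) * Real.sqrt (p i x / ϱ x) * ϱ x by ring,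
              Real.mul_self_sqrt (div_nonneg (hpnonneg i x) (hϱ x).1.le),
              div_mul_cancel₀ _ (hϱ x).1.ne']
          calc u i x * (((ϱ x : ℝ) : ℂ) * (u i x * a x))
              = ((Real.sqrt (p i x / ϱ x) * (ϱ x * Real.sqrt (p i x / ϱ x)) : ℝ) : ℂ) * a x := by
                simp only [hu, ContinuousMap.coe_mk]
                push_cast
                ring
            _ = ((p i x : ℝ) : ℂ) * a x := by rw [hsqrt]
        · intro x' hx'F hne
          rw [ContinuousMap.mul_apply]
          rcases eq_or_ne (p i x') 0 with hq0 | hq0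
          · rw [huzero i x' hq0]
            simp
          · exfalso
            exact hne (hUinj i (husupp i x' hq0) hxU ((mem_fiber_finset' hloc).mp hx'F))
        · intro hxa
          exact absurd ((mem_fiber_finset' hloc).mpr rfl) hxa
    calc a x = ((1 : ℝ) : ℂ) * a x := by simp
      _ = ∑ i, ((p i x : ℝ) : ℂ) * a x := by
          rw [← hpsum x]
          push_cast
          rw [Finset.sum_mul]
      _ = ∑ i, (u i * ((L (star (u i) * a)).comp φ)) x :=
          Finset.sum_congr rfl fun i _ => (hterm i).symm
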